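/- If L is a canonical n-lattice (levellised and <-minimal among all levellised n-lattices isomorphic to it as unlabelled lattices), then L', the lattice obtained from L by removing its deepest nonzero level, is also canonical. -/

import Mathlib

namespace PaperLattice

variable {N : ℕ}

/-- Depth: one less than the maximum length of a chain from `t` down to `a` w.r.t. `le`. -/
noncomputable def dep (le : Fin N → Fin N → Prop) (t a : Fin N) : ℕ :=
  sSup {k | ∃ l : List (Fin N), List.Chain' (fun x y => le y x ∧ y ≠ x) l ∧
    l.head? = some t ∧ l.getLast? = some a ∧ l.length = k + 1}

/-- The `d`-th level: elements of depth `d`. -/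
noncomputable def lev (le : Fin N → Fin N → Prop) (t : Fin N) (d : ℕ) : Set (Fin N) :=
  {a | dep le t a = d}

/-- A labelled poset is levellised if depth is monotone in the nonzero labels. -/
def Levellised (le : Fin N → Fin N → Prop) (t : Fin N) : Prop :=
  ∀ i j : Fin N, 0 < (i : ℕ) → (i : ℕ) ≤ (j : ℕ) → dep le t i ≤ dep le t j

def lt' (le : Fin N → Fin N → Prop) (a b : Fin N) : Prop := le a b ∧ a ≠ b

/-- `b` covers `a`. -/
def CovByRel (le : Fin N → Fin N → Prop) (a b : Fin N) : Prop :=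
  lt' le a b ∧ ∀ x, lt' le a x → lt' le x b → False

/-- The covering set of `a`. -/
def cov (le : Fin N → Fin N → Prop) (a : Fin N) : Set (Fin N) := {b | CovByRel le a b}

/-- The up-set of `A`. -/
def upset (le : Fin N → Fin N → Prop) (A : Set (Fin N)) : Set (Fin N) :=
  {x | ∃ a ∈ A, le a x}

def AntichainRel (le : Fin N → Fin N → Prop) (A : Set (Fin N)) : Prop :=
  ∀ a ∈ A, ∀ b ∈ A, a ≠ b → ¬ le a b

/-- Binary weight of a set of labels. -/
noncomputable def wt (A : Set (Fin N)) : ℕ :=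
  ∑ j : Fin N, A.indicator (fun j => 2 ^ (j : ℕ)) j

/-- `z` is a bottom and `o` a top for `le`. -/
def Bounds (le : Fin N → Fin N → Prop) (z o : Fin N) : Prop :=
  (∀ a, le z a) ∧ (∀ a, le a o)

/-- The order obtained from `le` by adding `m` new atoms, the `i`-th having covering set `A i`. -/
def extLe {n m : ℕ} (le : Fin n → Fin n → Prop) (A : Fin m → Set (Fin n)) :
    Fin (n + m) → Fin (n + m) → Prop := fun x y =>
  if hx : (x : ℕ) < n then
    if hy : (y : ℕ) < n then le ⟨x, hx⟩ ⟨y, hy⟩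
    else (x : ℕ) = 0
  else
    if hy : (y : ℕ) < n then
      (⟨y, hy⟩ : Fin n) ∈ upset le (A ⟨(x : ℕ) - n, by have := x.isLt; omega⟩)
    else x = y

/-- The relabelled order `π(L)`. -/
def permLe {n : ℕ} (π : Equiv.Perm (Fin n)) (le : Fin n → Fin n → Prop) :
    Fin n → Fin n → Prop := fun a b => le (π.symm a) (π.symm b)


/-- The weight of the part of the covering set of `i` lying on level `d`. -/
noncomputable def covwt {N : ℕ} (le : Fin N → Fin N → Prop) (t : Fin N) (d : ℕ)
    (i : Fin N) : ℕ :=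
  wt (cov le i ∩ lev le t d)

/-- The level-major order on levellised labelled lattices: `L₁ < L₂` iff at the first
position — blocks of elements ordered by increasing depth, within a block levels `d`
of the covering sets in decreasing order, within a level elements in increasing label
order — the covering weight of `L₁` is smaller than that of `L₂`. -/
noncomputable def ltLM {N : ℕ} (L₁ L₂ : Lattice (Fin N)) (t : Fin N) : Prop :=
  ∃ (i : Fin N) (d : ℕ), 0 < (i : ℕ) ∧ 1 ≤ d ∧ d < dep L₁.le t i ∧
    covwt L₁.le t d i < covwt L₂.le t d i ∧
    ∀ (j : Fin N) (e : ℕ), 0 < (j : ℕ) → 1 ≤ e → e < dep L₁.le t j →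
      (dep L₁.le t j < dep L₁.le t i ∨
        (dep L₁.le t j = dep L₁.le t i ∧ d < e) ∨
        (dep L₁.le t j = dep L₁.le t i ∧ e = d ∧ (j : ℕ) < (i : ℕ))) →
      covwt L₁.le t e j = covwt L₂.le t e j

/-- `L` is canonical: a levellised `n`-lattice that is `<`-minimal (for the level-major
order) among all levellised `n`-lattices isomorphic to it as unlabelled lattices. -/
noncomputable def Canonical {N : ℕ} (L : Lattice (Fin N)) (z o : Fin N) : Prop :=
  Bounds L.le z o ∧ Levellised L.le o ∧
    ∀ M : Lattice (Fin N), Bounds M.le z o → Levellised M.le o →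
      (∃ π : Equiv.Perm (Fin N), ∀ x y, M.le x y ↔ permLe π L.le x y) →
      ¬ ltLM M L o

/-! ### Auxiliary machinery -/

/-- The set of chain-lengths-minus-one from `t` down to `a`. -/
def chainSet (le : Fin N → Fin N → Prop) (t a : Fin N) : Set ℕ :=
  {k | ∃ l : List (Fin N), List.Chain' (fun x y => le y x ∧ y ≠ x) l ∧
    l.head? = some t ∧ l.getLast? = some a ∧ l.length = k + 1}

lemma dep_def (le : Fin N → Fin N → Prop) (t a : Fin N) :
    dep le t a = sSup (chainSet le t a) := rfl

lemma chainSet_bddAbove {le : Fin N → Fin N → Prop}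
    (htrans : ∀ a b c, le a b → le b c → le a c)
    (hanti : ∀ a b, le a b → le b a → a = b) (t a : Fin N) :
    BddAbove (chainSet le t a) := by
  refine ⟨N, fun k hk => ?_⟩
  obtain ⟨l, hc, hh, hl, hlen⟩ := hk
  haveI : IsTrans (Fin N) (fun x y => le y x ∧ y ≠ x) := by
    constructor
    rintro x y z ⟨h1, h2⟩ ⟨h3, h4⟩
    refine ⟨htrans _ _ _ h3 h1, fun hzx => ?_⟩
    subst hzx
    exact h2 (hanti _ _ h1 h3)
  have hpw : l.Pairwise (fun x y => le y x ∧ y ≠ x) := List.isChain_iff_pairwise.mp hc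
  have hnd : l.Nodup := hpw.imp (fun h => Ne.symm h.2)
  have := List.Nodup.length_le_card hnd
  simp only [Fintype.card_fin] at this
  omega

lemma chainSet_nonempty {le : Fin N → Fin N → Prop} {t : Fin N}
    (htop : ∀ a, le a t) (a : Fin N) : (chainSet le t a).Nonempty := by
  by_cases h : a = t
  · exact ⟨0, [t], by simp [List.Chain'], by simp, by simp [h], by simp⟩
  · exact ⟨1, [t, a], by simp [List.Chain', htop a, h], by simp, by simp, by simp⟩

lemma dep_mem {le : Fin N → Fin N → Prop} {t : Fin N}
    (htrans : ∀ a b c, le a b → le b c → le a c)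
    (hanti : ∀ a b, le a b → le b a → a = b)
    (htop : ∀ a, le a t) (a : Fin N) :
    dep le t a ∈ chainSet le t a :=
  Nat.sSup_mem (chainSet_nonempty htop a) (chainSet_bddAbove htrans hanti t a)

lemma le_dep {le : Fin N → Fin N → Prop} {t a : Fin N} {k : ℕ}
    (htrans : ∀ a b c, le a b → le b c → le a c)
    (hanti : ∀ a b, le a b → le b a → a = b)
    (hk : k ∈ chainSet le t a) : k ≤ dep le t a :=
  le_csSup (chainSet_bddAbove htrans hanti t a) hk

/-- Appending a strictly smaller element to an optimal chain. -/
lemma dep_lt_of_lt {le : Fin N → Fin N → Prop} {t : Fin N}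
    (htrans : ∀ a b c, le a b → le b c → le a c)
    (hanti : ∀ a b, le a b → le b a → a = b)
    (htop : ∀ a, le a t) {a b : Fin N} (hab : le a b) (hne : a ≠ b) :
    dep le t b < dep le t a := by
  obtain ⟨l, hc, hh, hl, hlen⟩ := dep_mem htrans hanti htop b
  have hlne : l ≠ [] := by rintro rfl; simp at hh
  have hmem : dep le t b + 1 ∈ chainSet le t a := by
    refine ⟨l ++ [a], ?_, ?_, ?_, ?_⟩
    · rw [List.Chain', List.isChain_append]
      refine ⟨hc, by simp, ?_⟩
      intro x hx y hy
      simp only [List.head?_cons, Option.mem_def, Option.some.injEq] at hy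
      subst hy
      rw [hl] at hx
      simp only [Option.mem_def, Option.some.injEq] at hx
      subst hx
      exact ⟨hab, hne⟩
    · rwa [List.head?_append_of_ne_nil _ hlne]
    · simp
    · simp [hlen]
  have := le_dep htrans hanti hmem
  omega

/-- Every element of a chain ending at `a` lies above `a`. -/
lemma chain_last_le {le : Fin N → Fin N → Prop}
    (htrans : ∀ a b c, le a b → le b c → le a c)
    (hrefl : ∀ a, le a a) {a : Fin N} :
    ∀ (l : List (Fin N)), List.Chain' (fun x y => le y x ∧ y ≠ x) l →
      l.getLast? = some a → ∀ x ∈ l, le a x := by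
  intro l
  induction l with
  | nil => intro _ h; simp at h
  | cons y l ih =>
    intro hc hl x hx
    cases l with
    | nil =>
      simp only [List.getLast?_singleton, Option.some.injEq] at hl
      simp only [List.mem_singleton] at hx
      subst hl; subst hx; exact hrefl _
    | cons z l' =>
      have hc' : List.Chain' (fun x y => le y x ∧ y ≠ x) (z :: l') := hc.tail
      have hzy : le z y := (List.isChain_cons_cons.mp hc).1.1
      have hl' : (z :: l').getLast? = some a := by
        rwa [List.getLast?_cons_cons] at hl
      rcases List.mem_cons.mp hx with rfl | hx'
      · exact htrans _ _ _ (ih hc' hl' z (by simp)) hzy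
      · exact ih hc' hl' x hx'

/-- Transport a chain along a map that is strictly monotone on the elements above `a`. -/
lemma mem_chainSet_map {N₂ : ℕ} {le₁ : Fin N → Fin N → Prop}
    {le₂ : Fin N₂ → Fin N₂ → Prop}
    (htrans : ∀ a b c, le₁ a b → le₁ b c → le₁ a c)
    (hrefl : ∀ a, le₁ a a)
    (f : Fin N → Fin N₂) (P : Fin N → Prop)
    {t a : Fin N} {k : ℕ}
    (hP : ∀ x, le₁ a x → P x)
    (hf : ∀ x y, P x → P y → le₁ y x → y ≠ x → le₂ (f y) (f x) ∧ f y ≠ f x)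
    (hk : k ∈ chainSet le₁ t a) : k ∈ chainSet le₂ (f t) (f a) := by
  obtain ⟨l, hc, hh, hl, hlen⟩ := hk
  have hmem : ∀ x ∈ l, P x := fun x hx =>
    hP x (chain_last_le htrans hrefl l hc hl x hx)
  refine ⟨l.map f, ?_, ?_, ?_, by simp [hlen]⟩
  · clear hh hl hlen
    induction l with
    | nil => simp [List.Chain']
    | cons y l₂ ih =>
      cases l₂ with
      | nil => simp [List.Chain']
      | cons z l₃ =>
        simp only [List.map_cons, List.Chain', List.isChain_cons_cons] at *
        obtain ⟨⟨h1, h2⟩, h3⟩ := hc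
        exact ⟨hf y z (hmem y (by simp)) (hmem z (by simp)) h1 h2,
          ih h3 (fun x hx => hmem x (by simp [hx]))⟩
  · rw [List.head?_map, hh]; rfl
  · rw [List.getLast?_map, hl]; rfl

lemma wt_image_castLE {n n' : ℕ} (h : n' ≤ n) (A : Set (Fin n')) :
    wt ((Fin.castLE h) '' A) = wt A := by
  classical
  unfold wt
  have h1 : ∀ j : Fin n', A.indicator (fun j => 2 ^ (j : ℕ)) j
      = (Fin.castLE h '' A).indicator (fun j => 2 ^ (j : ℕ)) (Fin.castLEEmb h j) := by
    intro j
    by_cases hj : j ∈ A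
    · have hm : (Fin.castLEEmb h j : Fin n) ∈ Fin.castLE h '' A := ⟨j, hj, rfl⟩
      rw [Set.indicator_of_mem hj, Set.indicator_of_mem hm]
      rfl
    · rw [Set.indicator_of_notMem hj, Set.indicator_of_notMem]
      rintro ⟨x, hx, hxe⟩
      exact hj (Fin.castLE_injective h hxe ▸ hx)
  have h2 : ∑ j : Fin n', A.indicator (fun j => 2 ^ (j : ℕ)) j
      = ∑ j ∈ Finset.univ.map (Fin.castLEEmb h),
          (Fin.castLE h '' A).indicator (fun j => 2 ^ (j : ℕ)) j := by
    rw [Finset.sum_map]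
    exact Finset.sum_congr rfl (fun j _ => h1 j)
  rw [h2]
  refine (Finset.sum_subset (Finset.subset_univ _) ?_).symm
  intro x _ hx
  apply Set.indicator_of_notMem
  rintro ⟨y, _, hy⟩
  exact hx (Finset.mem_map.mpr ⟨y, Finset.mem_univ _, hy⟩)

lemma permLe_trans {n : ℕ} (σ : Equiv.Perm (Fin n)) (L : Lattice (Fin n)) :
    ∀ a b c, permLe σ L.le a b → permLe σ L.le b c → permLe σ L.le a c :=
  fun _ _ _ h1 h2 => L.le_trans _ _ _ h1 h2

/-- The relabelled lattice. -/
def permLattice {n : ℕ} (σ : Equiv.Perm (Fin n)) (L : Lattice (Fin n)) :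
    Lattice (Fin n) where
  le := permLe σ L.le
  lt := fun a b => permLe σ L.le a b ∧ ¬ permLe σ L.le b a
  lt_iff_le_not_ge := fun _ _ => Iff.rfl
  le_refl := fun a => L.le_refl _
  le_trans := permLe_trans σ L
  le_antisymm := fun a b h1 h2 => by
    have := L.le_antisymm _ _ h1 h2
    have := congrArg σ this
    simpa using this
  sup := fun a b => σ (L.sup (σ.symm a) (σ.symm b))
  le_sup_left := fun a b => by
    show L.le _ _
    simp only [Equiv.symm_apply_apply]
    exact L.le_sup_left _ _
  le_sup_right := fun a b => by
    show L.le _ _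
    simp only [Equiv.symm_apply_apply]
    exact L.le_sup_right _ _
  sup_le := fun a b c h1 h2 => by
    show L.le _ _
    simp only [Equiv.symm_apply_apply]
    exact L.sup_le _ _ _ h1 h2
  inf := fun a b => σ (L.inf (σ.symm a) (σ.symm b))
  inf_le_left := fun a b => by
    show L.le _ _
    simp only [Equiv.symm_apply_apply]
    exact L.inf_le_left _ _
  inf_le_right := fun a b => by
    show L.le _ _
    simp only [Equiv.symm_apply_apply]
    exact L.inf_le_right _ _
  le_inf := fun a b c h1 h2 => by
    show L.le _ _
    simp only [Equiv.symm_apply_apply]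
    exact L.le_inf _ _ _ h1 h2

lemma permLattice_le {n : ℕ} (σ : Equiv.Perm (Fin n)) (L : Lattice (Fin n)) :
    (permLattice σ L).le = permLe σ L.le := rfl

/-- Depth is equivariant under relabelling. -/
lemma dep_perm {n : ℕ} (σ : Equiv.Perm (Fin n)) (L : Lattice (Fin n)) (t a : Fin n) :
    dep (permLe σ L.le) t a = dep L.le (σ.symm t) (σ.symm a) := by
  rw [dep_def, dep_def]
  congr 1
  apply Set.eq_of_subset_of_subset
  · intro k hk
    exact mem_chainSet_map (permLe_trans σ L) (fun _ => L.le_refl _) σ.symm (fun _ => True)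
      (fun _ _ => trivial)
      (fun x y _ _ h1 h2 => ⟨h1, fun he => h2 (σ.symm.injective he)⟩) hk
  · intro k hk
    have := mem_chainSet_map (le₂ := permLe σ L.le) (L.le_trans) (L.le_refl) σ (fun _ => True)
      (fun _ _ => trivial)
      (fun x y _ _ h1 h2 => ⟨by simpa [permLe] using h1, fun he => h2 (σ.injective he)⟩) hk
    simpa using this

section Restrict

variable {n n' : ℕ} (hlt : n' ≤ n)

/-- The restriction of a lattice to the surviving labels is a lattice. -/
lemma exists_restriction (h0 : 0 < n') (K : Lattice (Fin n))
    (hz : ∀ a, K.le ⟨0, by omega⟩ a)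
    (hsurv : ∀ (a : Fin n'), 0 < (a : ℕ) → ∀ x, K.le (Fin.castLE hlt a) x → (x : ℕ) < n') :
    ∃ M : Lattice (Fin n'),
      ∀ a b : Fin n', M.le a b ↔ K.le (Fin.castLE hlt a) (Fin.castLE hlt b) := by
  have hzc : ∀ a : Fin n', (a : ℕ) = 0 → Fin.castLE hlt a = ⟨0, by omega⟩ := by
    intro a ha; exact Fin.ext ha
  have hsup : ∀ a b : Fin n', ((K.sup (Fin.castLE hlt a) (Fin.castLE hlt b)) : ℕ) < n' := by
    intro a b
    by_cases ha : 0 < (a : ℕ)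
    · exact hsurv a ha _ (K.le_sup_left _ _)
    · have ha0 : Fin.castLE hlt a = ⟨0, by omega⟩ := hzc a (by omega)
      have : K.sup (Fin.castLE hlt a) (Fin.castLE hlt b) = Fin.castLE hlt b := by
        apply K.le_antisymm
        · exact K.sup_le _ _ _ (ha0 ▸ hz _) (K.le_refl _)
        · exact K.le_sup_right _ _
      rw [this]; exact b.isLt
  refine ⟨{
    le := fun a b => K.le (Fin.castLE hlt a) (Fin.castLE hlt b)
    lt := fun a b => K.le (Fin.castLE hlt a) (Fin.castLE hlt b) ∧
      ¬ K.le (Fin.castLE hlt b) (Fin.castLE hlt a)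
    lt_iff_le_not_ge := fun _ _ => Iff.rfl
    le_refl := fun a => K.le_refl _
    le_trans := fun a b c h1 h2 => K.le_trans _ _ _ h1 h2
    le_antisymm := fun a b h1 h2 =>
      Fin.castLE_injective hlt (K.le_antisymm _ _ h1 h2)
    sup := fun a b => ⟨(K.sup (Fin.castLE hlt a) (Fin.castLE hlt b) : ℕ), hsup a b⟩
    le_sup_left := fun a b => by
      have : Fin.castLE hlt ⟨_, hsup a b⟩ = K.sup (Fin.castLE hlt a) (Fin.castLE hlt b) :=
        Fin.ext rfl
      show K.le _ _
      rw [this]; exact K.le_sup_left _ _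
    le_sup_right := fun a b => by
      have : Fin.castLE hlt ⟨_, hsup a b⟩ = K.sup (Fin.castLE hlt a) (Fin.castLE hlt b) :=
        Fin.ext rfl
      show K.le _ _
      rw [this]; exact K.le_sup_right _ _
    sup_le := fun a b c h1 h2 => by
      have : Fin.castLE hlt ⟨_, hsup a b⟩ = K.sup (Fin.castLE hlt a) (Fin.castLE hlt b) :=
        Fin.ext rfl
      show K.le _ _
      rw [this]; exact K.sup_le _ _ _ h1 h2
    inf := fun a b =>
      if h : ((K.inf (Fin.castLE hlt a) (Fin.castLE hlt b)) : ℕ) < n'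
      then ⟨_, h⟩ else ⟨0, h0⟩
    inf_le_left := fun a b => by
      show K.le _ _
      split
      · next h =>
        have : Fin.castLE hlt ⟨_, h⟩ = K.inf (Fin.castLE hlt a) (Fin.castLE hlt b) :=
          Fin.ext rfl
        rw [this]; exact K.inf_le_left _ _
      · exact hzc ⟨0, h0⟩ rfl ▸ hz _
    inf_le_right := fun a b => by
      show K.le _ _
      split
      · next h =>
        have : Fin.castLE hlt ⟨_, h⟩ = K.inf (Fin.castLE hlt a) (Fin.castLE hlt b) :=
          Fin.ext rfl
        rw [this]; exact K.inf_le_right _ _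
      · exact hzc ⟨0, h0⟩ rfl ▸ hz _
    le_inf := fun c a b h1 h2 => by
      show K.le _ _
      have hci : K.le (Fin.castLE hlt c) (K.inf (Fin.castLE hlt a) (Fin.castLE hlt b)) :=
        K.le_inf _ _ _ h1 h2
      split
      · next h =>
        have : Fin.castLE hlt ⟨_, h⟩ = K.inf (Fin.castLE hlt a) (Fin.castLE hlt b) :=
          Fin.ext rfl
        rw [this]; exact hci
      · next h =>
        have hc0 : (c : ℕ) = 0 := by
          by_contra hc
          exact h (hsurv c (by omega) _ hci)
        rw [hzc c hc0]
        exact hz _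
  }, fun a b => Iff.rfl⟩

/-- Depth in the restriction agrees with depth in the big lattice. -/
lemma dep_restrict (K : Lattice (Fin n)) (M : Lattice (Fin n'))
    (hMK : ∀ a b : Fin n', M.le a b ↔ K.le (Fin.castLE hlt a) (Fin.castLE hlt b))
    (t' a : Fin n')
    (hsurv : ∀ x, K.le (Fin.castLE hlt a) x → (x : ℕ) < n') :
    dep M.le t' a = dep K.le (Fin.castLE hlt t') (Fin.castLE hlt a) := by
  have h0 : 0 < n' := a.pos
  rw [dep_def, dep_def]
  congr 1
  apply Set.eq_of_subset_of_subset
  · intro k hk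
    exact mem_chainSet_map M.le_trans M.le_refl (Fin.castLE hlt) (fun _ => True)
      (fun _ _ => trivial)
      (fun x y _ _ h1 h2 => ⟨(hMK y x).mp h1, fun he => h2 (Fin.castLE_injective hlt he)⟩) hk
  · intro k hk
    have key := mem_chainSet_map (le₂ := M.le) K.le_trans K.le_refl
      (fun x : Fin n => if h : (x : ℕ) < n' then (⟨x, h⟩ : Fin n') else ⟨0, h0⟩)
      (fun x => (x : ℕ) < n') hsurv ?_ hk
    · have e1 : ∀ b : Fin n',
          (if h : ((Fin.castLE hlt b : Fin n) : ℕ) < n' then (⟨_, h⟩ : Fin n') else ⟨0, h0⟩)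
            = b := by
        intro b
        rw [dif_pos (show ((Fin.castLE hlt b : Fin n) : ℕ) < n' from b.isLt)]
        exact Fin.ext rfl
      simp only [e1] at key
      exact key
    · intro x y hx hy h1 h2
      constructor
      · simp only [dif_pos hx, dif_pos hy, hMK]
        have ex : Fin.castLE hlt ⟨(x : ℕ), hx⟩ = x := Fin.ext rfl
        have ey : Fin.castLE hlt ⟨(y : ℕ), hy⟩ = y := Fin.ext rfl
        rw [ex, ey]; exact h1
      · simp only [dif_pos hx, dif_pos hy]
        intro he
        have hv : (y : ℕ) = (x : ℕ) := congrArg (fun z : Fin n' => (z : ℕ)) he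
        exact h2 (Fin.ext hv)

/-- Covering sets (intersected with levels) of surviving elements are preserved. -/
lemma covwt_restrict (K : Lattice (Fin n)) (M : Lattice (Fin n'))
    (hMK : ∀ a b : Fin n', M.le a b ↔ K.le (Fin.castLE hlt a) (Fin.castLE hlt b))
    (t' i : Fin n') (d : ℕ)
    (hsurv : ∀ x, K.le (Fin.castLE hlt i) x → (x : ℕ) < n') :
    covwt K.le (Fin.castLE hlt t') d (Fin.castLE hlt i) = covwt M.le t' d i := by
  unfold covwt
  rw [← wt_image_castLE hlt (cov M.le i ∩ lev M.le t' d)]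
  congr 1
  ext b
  constructor
  · rintro ⟨hbcov, hblev⟩
    have hib : K.le (Fin.castLE hlt i) b := hbcov.1.1
    have hb' : (b : ℕ) < n' := hsurv b hib
    have hcb : Fin.castLE hlt ⟨(b : ℕ), hb'⟩ = b := Fin.ext rfl
    refine (Set.mem_image _ _ _).mpr ⟨⟨(b : ℕ), hb'⟩, ⟨⟨⟨?_, ?_⟩, ?_⟩, ?_⟩, hcb⟩
    · exact (hMK i ⟨(b : ℕ), hb'⟩).mpr (by rw [hcb]; exact hib)
    · exact fun he => hbcov.1.2 (by rw [← hcb, ← he])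
    · intro x' hx1 hx2
      refine hbcov.2 (Fin.castLE hlt x') ⟨(hMK i x').mp hx1.1, ?_⟩
        ⟨by have := (hMK x' ⟨(b : ℕ), hb'⟩).mp hx2.1; rwa [hcb] at this, ?_⟩
      · exact fun he => hx1.2 (Fin.castLE_injective hlt he)
      · intro he
        apply hx2.2
        apply Fin.castLE_injective hlt
        rw [he, hcb]
    · show dep M.le t' _ = d
      rw [dep_restrict hlt K M hMK t' ⟨(b : ℕ), hb'⟩
        (fun x hx => hsurv x (K.le_trans _ _ _ hib (hcb ▸ hx))), hcb]
      exact hblev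
  · rintro ⟨b', ⟨⟨⟨hle, hne⟩, hmin⟩, hlev⟩, rfl⟩
    have hib : K.le (Fin.castLE hlt i) (Fin.castLE hlt b') := (hMK i b').mp hle
    refine ⟨⟨⟨hib, fun he => hne (Fin.castLE_injective hlt he)⟩, ?_⟩, ?_⟩
    · intro x hx1 hx2
      have hxn : (x : ℕ) < n' := hsurv x hx1.1
      have hcx : Fin.castLE hlt ⟨(x : ℕ), hxn⟩ = x := Fin.ext rfl
      refine hmin ⟨(x : ℕ), hxn⟩ ⟨(hMK i _).mpr (by rw [hcx]; exact hx1.1), ?_⟩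
        ⟨(hMK _ b').mpr (by rw [hcx]; exact hx2.1), ?_⟩
      · exact fun he => hx1.2 (by rw [← hcx, ← he])
      · exact fun he => hx2.2 (by rw [← hcx, he])
    · show dep K.le _ _ = d
      rw [← dep_restrict hlt K M hMK t' b'
        (fun x hx => hsurv x (K.le_trans _ _ _ hib hx))]
      exact hlev

end Restrict

section ExtPerm

variable {n n' : ℕ} (hle : n' ≤ n)

/-- Extend a permutation of the surviving labels by the identity. -/
def extFun (π' : Equiv.Perm (Fin n')) : Fin n → Fin n := fun x =>
  if h : (x : ℕ) < n' then Fin.castLE hle (π' ⟨x, h⟩) else x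

lemma extFun_inv (π' : Equiv.Perm (Fin n')) (x : Fin n) :
    extFun hle π'.symm (extFun hle π' x) = x := by
  unfold extFun
  by_cases h : (x : ℕ) < n'
  · rw [dif_pos h]
    have h2 : ((Fin.castLE hle (π' ⟨x, h⟩) : Fin n) : ℕ) < n' := (π' ⟨x, h⟩).isLt
    rw [dif_pos h2]
    have e : (⟨((Fin.castLE hle (π' ⟨x, h⟩) : Fin n) : ℕ), h2⟩ : Fin n') = π' ⟨x, h⟩ :=
      Fin.ext rfl
    rw [e, Equiv.symm_apply_apply]
    exact Fin.ext rfl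
  · rw [dif_neg h, dif_neg h]

def extPerm (π' : Equiv.Perm (Fin n')) : Equiv.Perm (Fin n) where
  toFun := extFun hle π'
  invFun := extFun hle π'.symm
  left_inv := extFun_inv hle π'
  right_inv := fun x => by
    have := extFun_inv hle π'.symm x
    rwa [Equiv.symm_symm] at this

lemma extPerm_symm (π' : Equiv.Perm (Fin n')) :
    (extPerm hle π').symm = extPerm hle π'.symm :=
  Equiv.ext fun _ => rfl

lemma extPerm_castLE (π' : Equiv.Perm (Fin n')) (a : Fin n') :
    extPerm hle π' (Fin.castLE hle a) = Fin.castLE hle (π' a) := by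
  show extFun hle π' _ = _
  unfold extFun
  rw [dif_pos (show ((Fin.castLE hle a : Fin n) : ℕ) < n' from a.isLt)]
  have e : (⟨((Fin.castLE hle a : Fin n) : ℕ), a.isLt⟩ : Fin n') = a := Fin.ext rfl
  rw [e]

lemma extPerm_ge (π' : Equiv.Perm (Fin n')) (x : Fin n) (h : ¬ (x : ℕ) < n') :
    extPerm hle π' x = x := by
  show extFun hle π' _ = _
  unfold extFun
  rw [dif_neg h]

end ExtPerm

/-- removing the deepest nonzero level (the labels `n', …, n-1`, keeping the
bottom `0`) of a canonical `n`-lattice yields a canonical `n'`-lattice. -/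
theorem statement18 {n n' : ℕ} (hn : 2 ≤ n) (hn' : 2 ≤ n') (hlt : n' < n)
    (L : Lattice (Fin n))
    (hcanon : Canonical L ⟨0, by omega⟩ ⟨1, by omega⟩)
    (hcut : ∀ a : Fin n, ((a : ℕ) < n' ↔ ((a : ℕ) = 0 ∨
      dep L.le ⟨1, by omega⟩ a < dep L.le ⟨1, by omega⟩ ⟨n - 1, by omega⟩))) :
    ∃ M : Lattice (Fin n'),
      (∀ a b : Fin n',
        M.le a b ↔ L.le (Fin.castLE (le_of_lt hlt) a) (Fin.castLE (le_of_lt hlt) b)) ∧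
      Canonical M ⟨0, by omega⟩ ⟨1, by omega⟩ := by
  obtain ⟨hbL, hlevL, hminL⟩ := hcanon
  have hle : n' ≤ n := le_of_lt hlt
  set t1 : Fin n := ⟨1, by omega⟩ with ht1
  set z1 : Fin n := ⟨0, by omega⟩ with hz1
  set t1' : Fin n' := ⟨1, by omega⟩ with ht1'
  set z1' : Fin n' := ⟨0, by omega⟩ with hz1'
  have hzL : ∀ a, L.le z1 a := hbL.1
  have htopL : ∀ a, L.le a t1 := hbL.2
  set D : ℕ := dep L.le t1 ⟨n - 1, by omega⟩ with hD
  -- basic depth facts in `L`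
  have hdepmax : ∀ x : Fin n, 0 < (x : ℕ) → dep L.le t1 x ≤ D := by
    intro x hx
    exact hlevL x ⟨n - 1, by omega⟩ hx (by show (x : ℕ) ≤ n - 1; omega)
  have hcutlt : ∀ x : Fin n, 0 < (x : ℕ) → (x : ℕ) < n' → dep L.le t1 x < D := by
    intro x hx hxn
    rcases (hcut x).mp hxn with h | h
    · omega
    · exact h
  have hDeq : ∀ x : Fin n, n' ≤ (x : ℕ) → dep L.le t1 x = D := by
    intro x hx
    have h1 : ¬ ((x : ℕ) = 0 ∨ dep L.le t1 x < D) := fun h => by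
      have := (hcut x).mpr h; omega
    push_neg at h1
    have := hdepmax x (by omega)
    omega
  have hsurvL : ∀ (a : Fin n'), 0 < (a : ℕ) →
      ∀ x, L.le (Fin.castLE hle a) x → (x : ℕ) < n' := by
    intro a ha x hx
    by_cases hxa : Fin.castLE hle a = x
    · rw [← hxa]; exact a.isLt
    · have h1 : dep L.le t1 x < dep L.le t1 (Fin.castLE hle a) :=
        dep_lt_of_lt L.le_trans L.le_antisymm htopL hx hxa
      have h2 : dep L.le t1 (Fin.castLE hle a) ≤ D := hdepmax _ (by exact ha)
      exact (hcut x).mpr (Or.inr (by omega))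
  obtain ⟨M, hM⟩ := exists_restriction hle (by omega) L hzL hsurvL
  have hcz : Fin.castLE hle z1' = z1 := Fin.ext rfl
  have hct : Fin.castLE hle t1' = t1 := Fin.ext rfl
  -- depth agrees on survivors
  have hdM : ∀ a : Fin n', 0 < (a : ℕ) →
      dep M.le t1' a = dep L.le t1 (Fin.castLE hle a) := by
    intro a ha
    rw [dep_restrict hle L M hM t1' a (hsurvL a ha), hct]
  refine ⟨M, hM, ⟨fun a => (hM _ _).mpr (by rw [hcz]; exact hzL _),
      fun a => (hM _ _).mpr (by rw [hct]; exact htopL _)⟩, ?_, ?_⟩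
  · -- M is levellised
    intro i j hi hij
    have hj : 0 < (j : ℕ) := by omega
    rw [hdM i hi, hdM j hj]
    exact hlevL _ _ (by exact hi) (by exact hij)
  · -- minimality
    intro M' hbM' hlevM' ⟨π', hπ'⟩ hltM'M
    -- π' fixes bottom and top
    have hπz : π'.symm z1' = z1' := by
      apply M.le_antisymm
      · have := hbM'.1 (π' z1')
        rw [hπ' z1' (π' z1')] at this
        have h2 : M.le (π'.symm z1') (π'.symm (π' z1')) := this
        rwa [Equiv.symm_apply_apply] at h2
      · exact (hM _ _).mpr (by rw [hcz]; exact hzL _)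
    have hπt : π'.symm t1' = t1' := by
      apply M.le_antisymm
      · exact (hM _ _).mpr (by rw [hct]; exact htopL _)
      · have := hbM'.2 (π' t1')
        rw [hπ' (π' t1') t1'] at this
        have h2 : M.le (π'.symm (π' t1')) (π'.symm t1') := this
        rwa [Equiv.symm_apply_apply] at h2
    have hπpos : ∀ a : Fin n', 0 < (a : ℕ) → 0 < ((π'.symm a : Fin n') : ℕ) := by
      intro a ha
      by_contra h
      have h0 : π'.symm a = z1' := Fin.ext (by simp at h ⊢; omega)
      have : a = z1' := by
        have := congrArg π' (h0.trans hπz.symm)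
        simpa using this
      rw [this] at ha
      simp [hz1'] at ha
    set σ : Equiv.Perm (Fin n) := extPerm hle π' with hσ
    have hσsymm_cast : ∀ a : Fin n', σ.symm (Fin.castLE hle a) = Fin.castLE hle (π'.symm a) := by
      intro a
      rw [hσ, extPerm_symm, extPerm_castLE]
    have hσsymm_ge : ∀ x : Fin n, n' ≤ (x : ℕ) → σ.symm x = x := by
      intro x hx
      rw [hσ, extPerm_symm, extPerm_ge]
      omega
    set L₂ : Lattice (Fin n) := permLattice σ L with hL₂
    have hL₂le : ∀ x y, L₂.le x y ↔ L.le (σ.symm x) (σ.symm y) := fun x y => Iff.rfl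
    have hσz : σ.symm z1 = z1 := by
      rw [← hcz, hσsymm_cast, hπz]
    have hσt : σ.symm t1 = t1 := by
      rw [← hct, hσsymm_cast, hπt]
    have hbL₂ : Bounds L₂.le z1 t1 :=
      ⟨fun a => (hL₂le _ _).mpr (by rw [hσz]; exact hzL _),
       fun a => (hL₂le _ _).mpr (by rw [hσt]; exact htopL _)⟩
    have hM'L₂ : ∀ a b : Fin n', M'.le a b ↔ L₂.le (Fin.castLE hle a) (Fin.castLE hle b) := by
      intro a b
      rw [hπ' a b]
      show M.le (π'.symm a) (π'.symm b) ↔ _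
      rw [hM (π'.symm a) (π'.symm b), hL₂le, hσsymm_cast, hσsymm_cast]
    have hdep₂ : ∀ x : Fin n, dep L₂.le t1 x = dep L.le t1 (σ.symm x) := by
      intro x
      have := dep_perm σ L t1 x
      rw [hσt] at this
      exact this
    have hsurvL₂ : ∀ (a : Fin n'), 0 < (a : ℕ) →
        ∀ x, L₂.le (Fin.castLE hle a) x → (x : ℕ) < n' := by
      intro a ha x hx
      rw [hL₂le, hσsymm_cast] at hx
      have h1 : ((σ.symm x : Fin n) : ℕ) < n' := hsurvL (π'.symm a) (hπpos a ha) _ hx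
      by_contra h2
      rw [hσsymm_ge x (by omega)] at h1
      omega
    -- depth in L₂ agrees with M' on survivors
    have hdM' : ∀ a : Fin n', 0 < (a : ℕ) →
        dep M'.le t1' a = dep L₂.le t1 (Fin.castLE hle a) := by
      intro a ha
      rw [dep_restrict hle L₂ M' hM'L₂ t1' a (hsurvL₂ a ha), hct]
    have hdM'D : ∀ a : Fin n', 0 < (a : ℕ) → dep M'.le t1' a < D := by
      intro a ha
      rw [hdM' a ha, hdep₂, hσsymm_cast]
      exact hcutlt _ (hπpos a ha) (π'.symm a).isLt
    have hlevL₂ : Levellised L₂.le t1 := by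
      intro i j hi hij
      have hj : 0 < (j : ℕ) := by omega
      by_cases hjn : (j : ℕ) < n'
      · have hin : (i : ℕ) < n' := by omega
        have ei : Fin.castLE hle ⟨(i : ℕ), hin⟩ = i := Fin.ext rfl
        have ej : Fin.castLE hle ⟨(j : ℕ), hjn⟩ = j := Fin.ext rfl
        rw [← ei, ← ej, ← hdM' _ (by exact hi), ← hdM' _ (by exact hj)]
        exact hlevM' _ _ (by exact hi) (by exact hij)
      · have hjD : dep L₂.le t1 j = D := by
          rw [hdep₂, hσsymm_ge j (by omega)]
          exact hDeq j (by omega)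
        rw [hjD]
        by_cases hin : (i : ℕ) < n'
        · have ei : Fin.castLE hle ⟨(i : ℕ), hin⟩ = i := Fin.ext rfl
          rw [← ei, ← hdM' _ (by exact hi)]
          exact le_of_lt (hdM'D _ (by exact hi))
        · rw [hdep₂, hσsymm_ge i (by omega)]
          exact hdepmax i hi
    -- covwt agreement
    have hcwM : ∀ (a : Fin n') (d : ℕ), 0 < (a : ℕ) →
        covwt L.le t1 d (Fin.castLE hle a) = covwt M.le t1' d a := by
      intro a d ha
      rw [← covwt_restrict hle L M hM t1' a d (hsurvL a ha), hct]
    have hcwM' : ∀ (a : Fin n') (d : ℕ), 0 < (a : ℕ) →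
        covwt L₂.le t1 d (Fin.castLE hle a) = covwt M'.le t1' d a := by
      intro a d ha
      rw [← covwt_restrict hle L₂ M' hM'L₂ t1' a d (hsurvL₂ a ha), hct]
    -- build the contradiction with minimality of L
    obtain ⟨i, d, hi0, hd1, hdd, hcw, hprev⟩ := hltM'M
    apply hminL L₂ hbL₂ hlevL₂ ⟨σ, fun x y => Iff.rfl⟩
    refine ⟨Fin.castLE hle i, d, by exact hi0, hd1, ?_, ?_, ?_⟩
    · rw [← hdM' i hi0]
      exact hdd
    · rw [hcwM' i d hi0, hcwM i d hi0]
      exact hcw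
    · intro j e hj0 he1 hedep hpos
      by_cases hjn : (j : ℕ) < n'
      · have ej : Fin.castLE hle ⟨(j : ℕ), hjn⟩ = j := Fin.ext rfl
        have hj0' : 0 < ((⟨(j : ℕ), hjn⟩ : Fin n') : ℕ) := hj0
        rw [← ej, hcwM' _ e hj0', hcwM _ e hj0']
        apply hprev ⟨(j : ℕ), hjn⟩ e hj0' he1
        · rw [hdM' _ hj0', ej]
          exact hedep
        · rw [hdM' _ hj0', hdM' i hi0, ej]
          exact hpos
      · exfalso
        have hjD : dep L₂.le t1 j = D := by
          rw [hdep₂, hσsymm_ge j (by omega)]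
          exact hDeq j (by omega)
        have hiD : dep L₂.le t1 (Fin.castLE hle i) < D := by
          rw [← hdM' i hi0]
          exact hdM'D i hi0
        rcases hpos with h | h | h
        · omega
        · omega
        · omega

end PaperLattice
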